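/- Consider the control affine system ẋ = f(x) + g(x)u on an open set D ⊆ ℝⁿ with f, g continuous, h : D → ℝ continuously differentiable, μ : ℝ → ℝ continuous, and input constraints U(x) = {u ∈ ℝ^m : A(x)u ≤ b(x) componentwise}, where A : D → ℝ^{q×m} and b : D → ℝ^q are continuous. Define K(x) = {u ∈ U(x) : L_f h(x) + L_g h(x)·u ≥ −μ(h(x))}. If for every x ∈ D the strict interior K_I(x) = {u ∈ ℝ^m : A(x)u < b(x) componentwise and L_f h(x) + L_g h(x)·u > −μ(h(x))} is nonempty, then there exists a continuous function k : D → ℝ^m with k(x) ∈ K(x) for all x ∈ D. -/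

import Mathlib

open Topology Filter

/-- Proposition 3: if the strict interior `K_I(x)` of the viable control set
`K(x) = {u ∈ U(x) : L_f h(x) + L_g h(x)·u ≥ −μ(h(x))}`, with affine input constraints
`U(x) = {u : A(x)u ≤ b(x)}`, is nonempty for each `x ∈ D`, then there exists a continuous
selection `k` with `k(x) ∈ K(x)` for all `x ∈ D`. -/
theorem exists_continuous_selection
    {n m q : ℕ} (D : Set (EuclideanSpace ℝ (Fin n))) (hD : IsOpen D)
    (f : EuclideanSpace ℝ (Fin n) → EuclideanSpace ℝ (Fin n)) (hf : ContinuousOn f D)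
    (g : EuclideanSpace ℝ (Fin n) →
      (EuclideanSpace ℝ (Fin m) →L[ℝ] EuclideanSpace ℝ (Fin n))) (hg : ContinuousOn g D)
    (h : EuclideanSpace ℝ (Fin n) → ℝ) (hh : ContDiffOn ℝ 1 h D)
    (μ : ℝ → ℝ) (hμ : Continuous μ)
    (A : EuclideanSpace ℝ (Fin n) → Matrix (Fin q) (Fin m) ℝ) (hA : ContinuousOn A D)
    (b : EuclideanSpace ℝ (Fin n) → Fin q → ℝ) (hb : ContinuousOn b D)
    (hKI : ∀ x ∈ D, ∃ u : EuclideanSpace ℝ (Fin m),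
      (∀ i : Fin q, ∑ j : Fin m, A x i j * u j < b x i) ∧
      -μ (h x) < fderiv ℝ h x (f x) + fderiv ℝ h x (g x u)) :
    ∃ k : EuclideanSpace ℝ (Fin n) → EuclideanSpace ℝ (Fin m), ContinuousOn k D ∧
      ∀ x ∈ D, (∀ i : Fin q, ∑ j : Fin m, A x i j * (k x) j ≤ b x i) ∧
        -μ (h x) ≤ fderiv ℝ h x (f x) + fderiv ℝ h x (g x (k x)) := by
  -- the set-valued map on the subtype
  set t : D → Set (EuclideanSpace ℝ (Fin m)) := fun p =>
    {u | (∀ i : Fin q, ∑ j : Fin m, A p.1 i j * u j ≤ b p.1 i) ∧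
      -μ (h p.1) ≤ fderiv ℝ h p.1 (f p.1) + fderiv ℝ h p.1 (g p.1 u)} with ht_def
  have hconv : ∀ p : D, Convex ℝ (t p) := by
    intro p u hu v hv a c ha hc hac
    constructor
    · intro i
      have : ∑ j : Fin m, A p.1 i j * (a • u + c • v) j
          = a * (∑ j : Fin m, A p.1 i j * u j) + c * (∑ j : Fin m, A p.1 i j * v j) := by
        rw [Finset.mul_sum, Finset.mul_sum, ← Finset.sum_add_distrib]
        refine Finset.sum_congr rfl fun j _ => ?_
        simp [PiLp.add_apply, PiLp.smul_apply, smul_eq_mul]; ring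
      rw [this]
      calc a * (∑ j : Fin m, A p.1 i j * u j) + c * (∑ j : Fin m, A p.1 i j * v j)
          ≤ a * b p.1 i + c * b p.1 i :=
            add_le_add (mul_le_mul_of_nonneg_left (hu.1 i) ha)
              (mul_le_mul_of_nonneg_left (hv.1 i) hc)
        _ = b p.1 i := by rw [← add_mul, hac, one_mul]
    · have e1 : g p.1 (a • u + c • v) = a • g p.1 u + c • g p.1 v := by
        simp [map_add, map_smul]
      have e2 : fderiv ℝ h p.1 (g p.1 (a • u + c • v))
          = a * fderiv ℝ h p.1 (g p.1 u) + c * fderiv ℝ h p.1 (g p.1 v) := by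
        rw [e1, map_add, map_smul, map_smul]; simp [smul_eq_mul]
      rw [e2]
      have h1 := mul_le_mul_of_nonneg_left hu.2 ha
      have h2 := mul_le_mul_of_nonneg_left hv.2 hc
      have e3 : a * (fderiv ℝ h p.1 (f p.1)) + c * (fderiv ℝ h p.1 (f p.1))
          = fderiv ℝ h p.1 (f p.1) := by rw [← add_mul, hac, one_mul]
      have e4 : a * (-μ (h p.1)) + c * (-μ (h p.1)) = -μ (h p.1) := by
        rw [← add_mul, hac, one_mul]
      nlinarith [h1, h2]
  -- continuity facts on D
  have hLf : ContinuousOn (fun y => fderiv ℝ h y (f y)) D :=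
    (hh.continuousOn_fderiv_of_isOpen hD le_rfl).clm_apply hf
  have hG : ∀ u₀, ContinuousOn (fun y => fderiv ℝ h y (g y u₀)) D :=
    fun u₀ => (hh.continuousOn_fderiv_of_isOpen hD le_rfl).clm_apply (hg.clm_apply continuousOn_const)
  have hAij : ∀ (i : Fin q) (j : Fin m), ContinuousOn (fun y => A y i j) D := by
    intro i j
    exact ((continuous_apply j).comp (continuous_apply i)).comp_continuousOn hA
  have hbi : ∀ i : Fin q, ContinuousOn (fun y => b y i) D :=
    fun i => (continuous_apply i).comp_continuousOn hb
  -- local constant selections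
  have key : ∀ p : D, ∃ c : EuclideanSpace ℝ (Fin m), ∀ᶠ y in 𝓝 p, c ∈ t y := by
    rintro ⟨x, hx⟩
    obtain ⟨u₀, hu1, hu2⟩ := hKI x hx
    have hmem : ∀ᶠ y in 𝓝 x, y ∈ D := hD.mem_nhds hx
    have h1 : ∀ᶠ y in 𝓝 x, ∀ i : Fin q, ∑ j : Fin m, A y i j * u₀ j < b y i := by
      rw [eventually_all]
      intro i
      have hca : ContinuousAt (fun y => ∑ j : Fin m, A y i j * u₀ j) x := by
        exact tendsto_finset_sum _ fun j _ =>
          ((hAij i j).continuousAt (hD.mem_nhds hx)).mul continuousAt_const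
      exact hca.eventually_lt ((hbi i).continuousAt (hD.mem_nhds hx)) (hu1 i)
    have h2 : ∀ᶠ y in 𝓝 x,
        -μ (h y) < fderiv ℝ h y (f y) + fderiv ℝ h y (g y u₀) := by
      have hhc : ContinuousAt h x := hh.continuousOn.continuousAt (hD.mem_nhds hx)
      have hl : ContinuousAt (fun y => -μ (h y)) x :=
        (hμ.continuousAt.comp hhc).neg
      have hr : ContinuousAt (fun y => fderiv ℝ h y (f y) + fderiv ℝ h y (g y u₀)) x :=
        (hLf.continuousAt (hD.mem_nhds hx)).add ((hG u₀).continuousAt (hD.mem_nhds hx))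
      exact hl.eventually_lt hr hu2
    have hall : ∀ᶠ y in 𝓝 x, y ∈ D ∧
        ((∀ i : Fin q, ∑ j : Fin m, A y i j * u₀ j ≤ b y i) ∧
          -μ (h y) ≤ fderiv ℝ h y (f y) + fderiv ℝ h y (g y u₀)) := by
      filter_upwards [hmem, h1, h2] with y hy h1y h2y
      exact ⟨hy, fun i => (h1y i).le, h2y.le⟩
    refine ⟨u₀, ?_⟩
    rw [nhds_subtype]
    exact Filter.eventually_comap.mpr (hall.mono (fun y hy z hz => by
      simp only [ht_def, Set.mem_setOf_eq]; rw [hz]; exact hy.2))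
  obtain ⟨G, hGmem⟩ := exists_continuous_forall_mem_convex_of_local_const hconv key
  classical
  refine ⟨fun x => if hx : x ∈ D then G ⟨x, hx⟩ else 0, ?_, ?_⟩
  · rw [continuousOn_iff_continuous_restrict]
    have : D.domRestrict (fun x => if hx : x ∈ D then G ⟨x, hx⟩ else 0) = fun p => G p := by
      funext p; simp only [Set.domRestrict, dif_pos p.2]
    rw [this]; exact G.continuous
  · intro x hx
    have := hGmem ⟨x, hx⟩
    simp only [ht_def, Set.mem_setOf_eq] at this
    simpa [dif_pos hx] using this
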